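/- Let R be a connected generalized root system, a an object, and i,j ∈ I with m := m^a_{ij} = |R^+(a) ∩ (ℤ≥0 α^a_i + ℤ≥0 α^a_j)| finite. Let f alternate i,j,i,j,…. Then a_{f,2m} = a, the composite 1^a s_{f,2m} is the identity of V^a, and R^+(a) ∩ (ℤ≥0 α^a_i + ℤ≥0 α^a_j) = { 1^a s_{f,t-1}(α^{a_{f,t-1}}_{f(t)}) : t ∈ {1,…,m} }. -/

import Mathlib

/-- A Cartan scheme `C(I, A, (τ_i), (C^a))`. -/
structure CartanScheme (I : Type*) [Fintype I] [DecidableEq I] (A : Type*) where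
  τ : I → A → A
  c : A → I → I → ℤ
  c_diag : ∀ a i, c a i i = 2
  c_nonpos : ∀ a i j, i ≠ j → c a i j ≤ 0
  c_zero_iff : ∀ a i j, i ≠ j → (c a i j = 0 ↔ c a j i = 0)
  τ_invol : ∀ i a, τ i (τ i a) = a
  c_invar : ∀ i a j, c (τ i a) i j = c a i j

namespace CartanScheme

variable {I : Type*} [Fintype I] [DecidableEq I] {A : Type*} (cs : CartanScheme I A)

/-- The map `s^a_i : V^a → V^{τ_i(a)}`, `α^a_j ↦ α^{τ_i(a)}_j − c^a_{ij} α^{τ_i(a)}_i`,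
written in the coordinates given by the bases `Π^a`, `Π^{τ_i(a)}`. -/
def sref (a : A) (i : I) (v : I → ℤ) : I → ℤ :=
  fun l => v l - (if l = i then ∑ j, cs.c a i j * v j else 0)

/-- `a_{f,t}`: the iterated images `a_{f,0} = a`, `a_{f,t} = τ_{f(t)}(a_{f,t-1})`. -/
def obj (a : A) (f : ℕ → I) : ℕ → A
  | 0 => a
  | t + 1 => cs.τ (f (t + 1)) (obj a f t)

/-- `1^a s_{f,t} : V^{a_{f,t}} → V^a`, defined by `1^a s_{f,0} = id` and
`1^a s_{f,t} = 1^a s_{f,t-1} ∘ s^{a_{f,t}}_{f(t)}`. -/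
def wmap (a : A) (f : ℕ → I) : ℕ → (I → ℤ) → (I → ℤ)
  | 0 => id
  | t + 1 => wmap a f t ∘ cs.sref (cs.obj a f (t + 1)) (f (t + 1))

end CartanScheme

/-- A connected generalized root system of type a Cartan scheme, with the spaces `V^a`
written in the coordinates given by the bases `Π^a` (so `α^a_i` is `Pi.single i 1`). -/
structure GenRootSystem (I : Type*) [Fintype I] [DecidableEq I] (A : Type*)
    extends CartanScheme I A where
  R : A → Set (I → ℤ)
  R1 : ∀ a, R a = (R a ∩ {v | ∀ i, 0 ≤ v i}) ∪ (-(R a ∩ {v | ∀ i, 0 ≤ v i}))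
  R2 : ∀ a i, R a ∩ (Set.range fun z : ℤ => z • (Pi.single i 1 : I → ℤ)) =
        {Pi.single i 1, -Pi.single i 1}
  R3 : ∀ a i, toCartanScheme.sref a i '' R a = R (τ i a)
  R4 : ∀ a b, a = b ↔ ∃ (f : ℕ → I) (t : ℕ), toCartanScheme.obj a f t = b ∧
        ∀ i, toCartanScheme.wmap a f t (Pi.single i 1) = Pi.single i 1
  R5 : ∀ a b, ∃ (f : ℕ → I) (t : ℕ), toCartanScheme.obj a f t = b

namespace GenRootSystem

variable {I : Type*} [Fintype I] [DecidableEq I] {A : Type*} (rs : GenRootSystem I A)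

/-- The positive roots `R^+(a)`. -/
def Rp (a : A) : Set (I → ℤ) := rs.R a ∩ {v | ∀ i, 0 ≤ v i}

/-- `a_{f,t}` for the root system. -/
def obj (a : A) (f : ℕ → I) (t : ℕ) : A := rs.toCartanScheme.obj a f t

/-- `1^a s_{f,t}` for the root system. -/
def wmap (a : A) (f : ℕ → I) (t : ℕ) : (I → ℤ) → (I → ℤ) := rs.toCartanScheme.wmap a f t

end GenRootSystem


section Helpers

namespace CartanScheme

variable {I : Type*} [Fintype I] [DecidableEq I] {A : Type*} (cs : CartanScheme I A)

lemma sref_add (a : A) (i : I) (u v : I → ℤ) :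
    cs.sref a i (u + v) = cs.sref a i u + cs.sref a i v := by
  funext l
  simp only [sref, Pi.add_apply, mul_add, Finset.sum_add_distrib]
  split <;> ring

lemma sref_smul (a : A) (i : I) (z : ℤ) (v : I → ℤ) :
    cs.sref a i (z • v) = z • cs.sref a i v := by
  funext l
  simp only [sref, Pi.smul_apply, smul_eq_mul]
  rw [show (∑ k, cs.c a i k * (z * v k)) = z * ∑ k, cs.c a i k * v k from by
    rw [Finset.mul_sum]; exact Finset.sum_congr rfl fun k _ => by ring]
  split <;> ring

lemma sref_neg (a : A) (i : I) (v : I → ℤ) :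
    cs.sref a i (-v) = - cs.sref a i v := by
  have := cs.sref_smul a i (-1) v
  simpa using this

lemma sref_zero (a : A) (i : I) : cs.sref a i 0 = 0 := by
  funext l; simp [sref]

lemma sref_apply_ne (a : A) (i : I) (v : I → ℤ) {l : I} (hl : l ≠ i) :
    cs.sref a i v l = v l := by
  simp [sref, hl]

lemma sref_sref (a : A) (i : I) (v : I → ℤ) :
    cs.sref a i (cs.sref a i v) = v := by
  funext l
  simp only [sref]
  have h : ∑ k, cs.c a i k * (v k - if k = i then ∑ n, cs.c a i n * v n else 0)
      = - ∑ n, cs.c a i n * v n := by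
    have h1 : ∀ k ∈ Finset.univ, cs.c a i k * (v k - if k = i then ∑ n, cs.c a i n * v n else 0)
        = cs.c a i k * v k - (if k = i then cs.c a i k * ∑ n, cs.c a i n * v n else 0) := by
      intro k _; split <;> ring
    rw [Finset.sum_congr rfl h1, Finset.sum_sub_distrib, Finset.sum_ite_eq' Finset.univ i
      (fun k => cs.c a i k * ∑ n, cs.c a i n * v n)]
    simp only [cs.c_diag, Finset.mem_univ, if_pos]
    ring
  rw [h]
  split <;> ring

lemma sref_injective (a : A) (i : I) : Function.Injective (cs.sref a i) := by
  intro u v huv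
  have := congrArg (cs.sref a i) huv
  rwa [cs.sref_sref, cs.sref_sref] at this

lemma sref_single (a : A) (k l : I) :
    cs.sref a k (Pi.single l 1) = Pi.single l 1 - cs.c a k l • Pi.single k 1 := by
  funext m
  have h : ∑ n, cs.c a k n * (Pi.single l 1 : I → ℤ) n = cs.c a k l := by
    have : ∀ n ∈ Finset.univ, cs.c a k n * (Pi.single l 1 : I → ℤ) n
        = if n = l then cs.c a k n else 0 := by
      intro n _; simp [Pi.single_apply]
    rw [Finset.sum_congr rfl this, Finset.sum_ite_eq' Finset.univ l (fun n => cs.c a k n)]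
    simp
  simp only [sref, h, Pi.sub_apply, Pi.smul_apply, smul_eq_mul, Pi.single_apply]
  split <;> split <;> simp_all

lemma sref_single_self (a : A) (k : I) :
    cs.sref a k (Pi.single k 1) = - Pi.single k 1 := by
  rw [cs.sref_single a k k, cs.c_diag]
  funext m; simp [Pi.single_apply]; split <;> ring

lemma sref_tau (a : A) (i : I) : cs.sref (cs.τ i a) i = cs.sref a i := by
  funext v l
  simp [sref, cs.c_invar]

lemma obj_succ_eq (a : A) (f : ℕ → I) (t : ℕ) :
    cs.obj a f (t + 1) = cs.τ (f (t + 1)) (cs.obj a f t) := rfl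

lemma tau_obj_succ (a : A) (f : ℕ → I) (t : ℕ) :
    cs.τ (f (t + 1)) (cs.obj a f (t + 1)) = cs.obj a f t := by
  rw [obj_succ_eq, cs.τ_invol]

lemma sref_obj_succ (a : A) (f : ℕ → I) (t : ℕ) :
    cs.sref (cs.obj a f (t + 1)) (f (t + 1)) = cs.sref (cs.obj a f t) (f (t + 1)) := by
  rw [obj_succ_eq, cs.sref_tau]

lemma wmap_succ (a : A) (f : ℕ → I) (t : ℕ) (v : I → ℤ) :
    cs.wmap a f (t + 1) v = cs.wmap a f t (cs.sref (cs.obj a f (t + 1)) (f (t + 1)) v) := rfl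

lemma wmap_add (a : A) (f : ℕ → I) (t : ℕ) (u v : I → ℤ) :
    cs.wmap a f t (u + v) = cs.wmap a f t u + cs.wmap a f t v := by
  induction t generalizing u v with
  | zero => rfl
  | succ t ih => rw [wmap_succ, wmap_succ, wmap_succ, cs.sref_add, ih]

lemma wmap_smul (a : A) (f : ℕ → I) (t : ℕ) (z : ℤ) (v : I → ℤ) :
    cs.wmap a f t (z • v) = z • cs.wmap a f t v := by
  induction t generalizing v with
  | zero => rfl
  | succ t ih => rw [wmap_succ, wmap_succ, cs.sref_smul, ih]

lemma wmap_neg (a : A) (f : ℕ → I) (t : ℕ) (v : I → ℤ) :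
    cs.wmap a f t (-v) = - cs.wmap a f t v := by
  have := cs.wmap_smul a f t (-1) v
  simpa using this

/-- The inverse maps of `wmap`. -/
def kmap (a : A) (f : ℕ → I) : ℕ → (I → ℤ) → (I → ℤ)
  | 0 => id
  | t + 1 => cs.sref (cs.obj a f (t + 1)) (f (t + 1)) ∘ kmap a f t

lemma wmap_kmap (a : A) (f : ℕ → I) (t : ℕ) (v : I → ℤ) :
    cs.wmap a f t (cs.kmap a f t v) = v := by
  induction t generalizing v with
  | zero => rfl
  | succ t ih =>
      show cs.wmap a f t (cs.sref _ _ (cs.sref _ _ (cs.kmap a f t v))) = v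
      rw [cs.sref_sref, ih]

lemma kmap_wmap (a : A) (f : ℕ → I) (t : ℕ) (v : I → ℤ) :
    cs.kmap a f t (cs.wmap a f t v) = v := by
  induction t generalizing v with
  | zero => rfl
  | succ t ih =>
      show cs.sref _ _ (cs.kmap a f t (cs.wmap a f t (cs.sref _ _ v))) = v
      rw [ih, cs.sref_sref]

lemma wmap_injective (a : A) (f : ℕ → I) (t : ℕ) :
    Function.Injective (cs.wmap a f t) := by
  intro u v huv
  have := congrArg (cs.kmap a f t) huv
  rwa [cs.kmap_wmap, cs.kmap_wmap] at this

lemma kmap_injective (a : A) (f : ℕ → I) (t : ℕ) :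
    Function.Injective (cs.kmap a f t) := by
  intro u v huv
  have := congrArg (cs.wmap a f t) huv
  rwa [cs.wmap_kmap, cs.wmap_kmap] at this

end CartanScheme

end Helpers


section Helpers2

namespace GenRootSystem

variable {I : Type*} [Fintype I] [DecidableEq I] {A : Type*} (rs : GenRootSystem I A)

lemma single_mem_R (a : A) (k : I) : (Pi.single k 1 : I → ℤ) ∈ rs.R a := by
  have h := rs.R2 a k
  have : (Pi.single k 1 : I → ℤ) ∈ ({Pi.single k 1, -Pi.single k 1} : Set (I → ℤ)) :=
    Set.mem_insert _ _
  rw [← h] at this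
  exact this.1

lemma single_mem_Rp (a : A) (k : I) : (Pi.single k 1 : I → ℤ) ∈ rs.Rp a := by
  refine ⟨rs.single_mem_R a k, ?_⟩
  intro l
  simp [Pi.single_apply]
  split <;> norm_num

lemma zero_not_mem_R (a : A) (k : I) : (0 : I → ℤ) ∉ rs.R a := by
  intro h0
  have h : (0 : I → ℤ) ∈ rs.R a ∩ (Set.range fun z : ℤ => z • (Pi.single k 1 : I → ℤ)) :=
    ⟨h0, ⟨0, by simp⟩⟩
  rw [rs.R2 a k] at h
  rcases h with h | h
  · have := congrFun h k
    simp [Pi.single_eq_same] at this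
  · have := congrFun h k
    simp [Pi.single_eq_same] at this

lemma scalar_cases (a : A) (k : I) (v : I → ℤ) (hv : v ∈ rs.R a)
    (hsupp : ∀ l, l ≠ k → v l = 0) :
    v = Pi.single k 1 ∨ v = - Pi.single k 1 := by
  have hvv : v = (v k) • (Pi.single k 1 : I → ℤ) := by
    funext l
    by_cases hl : l = k
    · subst hl; simp
    · simp [hsupp l hl, Pi.single_apply, hl]
  have h : v ∈ rs.R a ∩ (Set.range fun z : ℤ => z • (Pi.single k 1 : I → ℤ)) :=
    ⟨hv, ⟨v k, hvv.symm⟩⟩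
  rw [rs.R2 a k] at h
  exact h

lemma pos_or_neg (a : A) (v : I → ℤ) (hv : v ∈ rs.R a) :
    (∀ l, 0 ≤ v l) ∨ (∀ l, v l ≤ 0) := by
  rw [rs.R1 a] at hv
  rcases hv with hv | hv
  · exact Or.inl hv.2
  · right
    intro l
    have : -v ∈ rs.R a ∩ {v | ∀ i, 0 ≤ v i} := Set.mem_neg.mp hv
    have := this.2 l
    simpa using this

lemma root_ne_zero (a : A) (k : I) (v : I → ℤ) (hv : v ∈ rs.R a) : v ≠ 0 := by
  intro h; rw [h] at hv; exact rs.zero_not_mem_R a k hv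

lemma sref_mem_R (a : A) (k : I) (v : I → ℤ) (hv : v ∈ rs.R a) :
    rs.toCartanScheme.sref a k v ∈ rs.R (rs.τ k a) := by
  rw [← rs.R3 a k]
  exact ⟨v, hv, rfl⟩

/-- Lemma A : simple reflections permute the positive roots other than the simple root. -/
lemma sref_mem_Rp (a : A) (k : I) (v : I → ℤ) (hv : v ∈ rs.Rp a)
    (hne : v ≠ Pi.single k 1) :
    rs.toCartanScheme.sref a k v ∈ rs.Rp (rs.τ k a) := by
  have hmem : rs.toCartanScheme.sref a k v ∈ rs.R (rs.τ k a) := rs.sref_mem_R a k v hv.1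
  rcases rs.pos_or_neg _ _ hmem with hpos | hneg
  · exact ⟨hmem, hpos⟩
  · exfalso
    have hsupp : ∀ l, l ≠ k → v l = 0 := by
      intro l hl
      have h1 := hneg l
      rw [rs.toCartanScheme.sref_apply_ne a k v hl] at h1
      exact le_antisymm h1 (hv.2 l)
    rcases rs.scalar_cases a k v hv.1 hsupp with h | h
    · exact hne h
    · have := hv.2 k
      rw [h] at this
      simp [Pi.single_eq_same] at this

end GenRootSystem

end Helpers2


section Helpers3

namespace GenRootSystem

variable {I : Type*} [Fintype I] [DecidableEq I] {A : Type*} (rs : GenRootSystem I A)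

/-- The span condition: support contained in `{i, j}`. -/
def suppF (i j : I) : Set (I → ℤ) := {v | ∀ l, l ≠ i → l ≠ j → v l = 0}

lemma single_mem_suppF {i j k : I} (hk : k = i ∨ k = j) :
    (Pi.single k 1 : I → ℤ) ∈ suppF i j := by
  intro l hli hlj
  have : l ≠ k := by rcases hk with h | h <;> simp [h, hli, hlj]
  simp [Pi.single_apply, this]

lemma neg_mem_suppF {i j : I} {v : I → ℤ} (hv : v ∈ suppF i j) : -v ∈ suppF i j := by
  intro l hli hlj
  simp [hv l hli hlj]

lemma sref_mem_suppF {i j k : I} (hk : k = i ∨ k = j) (a : A) {v : I → ℤ}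
    (hv : v ∈ suppF i j) : rs.toCartanScheme.sref a k v ∈ suppF i j := by
  intro l hli hlj
  have hlk : l ≠ k := by rcases hk with h | h <;> simp [h, hli, hlj]
  rw [rs.toCartanScheme.sref_apply_ne a k v hlk]
  exact hv l hli hlj

lemma decompose_suppF {i j : I} (hij : i ≠ j) {v : I → ℤ} (hv : v ∈ suppF i j) :
    v = v i • (Pi.single i 1 : I → ℤ) + v j • (Pi.single j 1 : I → ℤ) := by
  funext l
  by_cases hli : l = i
  · subst hli; simp [Pi.single_apply, Ne.symm hij, hij]
  · by_cases hlj : l = j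
    · subst hlj; simp [Pi.single_apply, hij, Ne.symm hij]
    · simp [Pi.single_apply, hli, hlj, hv l hli hlj]

lemma neg_single_not_mem_Rp (a : A) (k : I) :
    (-Pi.single k 1 : I → ℤ) ∉ rs.Rp a := by
  intro h
  have := h.2 k
  simp [Pi.single_eq_same] at this

lemma neg_not_mem_Rp (a : A) (k : I) {v : I → ℤ} (hv : v ∈ rs.Rp a) :
    -v ∉ rs.Rp a := by
  intro h
  have hz : v = 0 := by
    funext l
    have h1 := hv.2 l
    have h2 := h.2 l
    simp only [Pi.neg_apply, neg_nonneg] at h2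
    exact le_antisymm h2 h1
  exact rs.root_ne_zero a k v hv.1 hz

/-- The image of the positive `{i,j}`-supported roots under a simple reflection. -/
lemma sref_image_PF {i j k : I} (hk : k = i ∨ k = j) (a : A) :
    rs.toCartanScheme.sref a k '' (rs.Rp a ∩ suppF i j)
      = ((rs.Rp (rs.τ k a) ∩ suppF i j) \ {Pi.single k 1}) ∪ {-Pi.single k 1} := by
  apply Set.Subset.antisymm
  · rintro x ⟨v, ⟨hvR, hvF⟩, rfl⟩
    by_cases hv : v = Pi.single k 1
    · subst hv
      right
      rw [rs.toCartanScheme.sref_single_self]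
      rfl
    · left
      refine ⟨⟨rs.sref_mem_Rp a k v hvR hv, rs.sref_mem_suppF hk a hvF⟩, ?_⟩
      intro hx
      simp only [Set.mem_singleton_iff] at hx
      have : v = rs.toCartanScheme.sref a k (Pi.single k 1) := by
        rw [← hx, rs.toCartanScheme.sref_sref]
      rw [rs.toCartanScheme.sref_single_self] at this
      rw [this] at hvR
      exact rs.neg_single_not_mem_Rp a k hvR
  · rintro x (⟨⟨hxR, hxF⟩, hxne⟩ | hx)
    · refine ⟨rs.toCartanScheme.sref a k x, ⟨?_, rs.sref_mem_suppF hk a hxF⟩,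
        rs.toCartanScheme.sref_sref a k x⟩
      have h := rs.sref_mem_Rp (rs.τ k a) k x hxR (by simpa using hxne)
      rwa [rs.τ_invol, rs.toCartanScheme.sref_tau] at h
    · simp only [Set.mem_singleton_iff] at hx
      subst hx
      exact ⟨Pi.single k 1, ⟨rs.single_mem_Rp a k, single_mem_suppF hk⟩,
        rs.toCartanScheme.sref_single_self a k⟩

end GenRootSystem

end Helpers3


section Helpers4

namespace GenRootSystem

variable {I : Type*} [Fintype I] [DecidableEq I] {A : Type*} (rs : GenRootSystem I A)

lemma wmap_mem_R (a : A) (f : ℕ → I) (t : ℕ) (v : I → ℤ)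
    (hv : v ∈ rs.R (rs.toCartanScheme.obj a f t)) :
    rs.toCartanScheme.wmap a f t v ∈ rs.R a := by
  induction t generalizing v with
  | zero => exact hv
  | succ t ih =>
      rw [rs.toCartanScheme.wmap_succ]
      apply ih
      have h := rs.sref_mem_R (rs.toCartanScheme.obj a f (t + 1)) (f (t + 1)) v hv
      rwa [rs.toCartanScheme.tau_obj_succ] at h

lemma kmap_mem_R (a : A) (f : ℕ → I) (t : ℕ) (v : I → ℤ) (hv : v ∈ rs.R a) :
    rs.toCartanScheme.kmap a f t v ∈ rs.R (rs.toCartanScheme.obj a f t) := by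
  induction t with
  | zero => exact hv
  | succ t ih =>
      show rs.toCartanScheme.sref _ _ (rs.toCartanScheme.kmap a f t v) ∈ _
      rw [rs.toCartanScheme.sref_obj_succ]
      have h := rs.sref_mem_R (rs.toCartanScheme.obj a f t) (f (t + 1)) _ ih
      rwa [← rs.toCartanScheme.obj_succ_eq] at h

lemma wmap_apply_ne {i j : I} (a : A) (f : ℕ → I)
    (hf1 : ∀ t, 1 ≤ t → f t = i ∨ f t = j) (t : ℕ) (v : I → ℤ)
    {l : I} (hli : l ≠ i) (hlj : l ≠ j) :
    rs.toCartanScheme.wmap a f t v l = v l := by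
  induction t generalizing v with
  | zero => rfl
  | succ t ih =>
      rw [rs.toCartanScheme.wmap_succ, ih]
      apply rs.toCartanScheme.sref_apply_ne
      rcases hf1 (t + 1) (by omega) with h | h <;> rw [h] <;> assumption

lemma kmap_apply_ne {i j : I} (a : A) (f : ℕ → I)
    (hf1 : ∀ t, 1 ≤ t → f t = i ∨ f t = j) (t : ℕ) (v : I → ℤ)
    {l : I} (hli : l ≠ i) (hlj : l ≠ j) :
    rs.toCartanScheme.kmap a f t v l = v l := by
  induction t generalizing v with
  | zero => rfl
  | succ t ih =>
      show rs.toCartanScheme.sref _ _ (rs.toCartanScheme.kmap a f t v) l = v l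
      rw [rs.toCartanScheme.sref_apply_ne, ih]
      rcases hf1 (t + 1) (by omega) with h | h <;> rw [h] <;> assumption

lemma wmap_image_neg (a : A) (f : ℕ → I) (t : ℕ) (S : Set (I → ℤ)) :
    rs.toCartanScheme.wmap a f t '' (-S) = -(rs.toCartanScheme.wmap a f t '' S) := by
  ext x
  constructor
  · rintro ⟨v, hv, rfl⟩
    rw [Set.mem_neg, ← rs.toCartanScheme.wmap_neg]
    exact ⟨-v, hv, rfl⟩
  · intro hx
    rw [Set.mem_neg] at hx
    rcases hx with ⟨v, hv, hveq⟩
    refine ⟨-v, by rwa [Set.mem_neg, neg_neg], ?_⟩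
    rw [rs.toCartanScheme.wmap_neg, hveq, neg_neg]

lemma ncard_Icc_one (t : ℕ) : (Set.Icc 1 t).ncard = t := by
  rw [← Finset.coe_Icc, Set.ncard_coe_finset, Nat.card_Icc]
  omega

/-- Phase 1: the first `n` roots `β_t` are distinct positive roots, and the inversion
set formula holds. -/
lemma phase1 {i j : I} (hij : i ≠ j) (a : A) (f : ℕ → I)
    (hf1 : ∀ t, 1 ≤ t → f t = i ∨ f t = j)
    (hf2 : ∀ t, 1 ≤ t → f (t + 1) ≠ f t)
    (hfin : (rs.Rp a ∩ suppF i j).Finite) :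
    ∀ t, t ≤ (rs.Rp a ∩ suppF i j).ncard →
      (∀ s, 1 ≤ s → s ≤ t →
        rs.toCartanScheme.wmap a f (s - 1) (Pi.single (f s) 1) ∈ rs.Rp a ∩ suppF i j) ∧
      Set.InjOn (fun s => rs.toCartanScheme.wmap a f (s - 1) (Pi.single (f s) 1))
        (Set.Icc 1 t) ∧
      rs.toCartanScheme.wmap a f t '' (rs.Rp (rs.toCartanScheme.obj a f t) ∩ suppF i j)
        = ((rs.Rp a ∩ suppF i j) \
            ((fun s => rs.toCartanScheme.wmap a f (s - 1) (Pi.single (f s) 1)) ''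
              (Set.Icc 1 t)))
          ∪ (-((fun s => rs.toCartanScheme.wmap a f (s - 1) (Pi.single (f s) 1)) ''
              (Set.Icc 1 t))) := by
  set P := rs.Rp a ∩ suppF i j with hP
  set β : ℕ → (I → ℤ) := fun s => rs.toCartanScheme.wmap a f (s - 1) (Pi.single (f s) 1)
    with hβ
  intro t
  induction t with
  | zero =>
      intro _
      refine ⟨by omega, ?_, ?_⟩
      · rw [Set.Icc_eq_empty (by omega)]
        exact Set.injOn_empty _
      · rw [Set.Icc_eq_empty (by omega)]
        simp only [Set.image_empty, Set.diff_empty, Set.neg_empty, Set.union_empty]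
        show (fun v => v) '' _ = _
        rw [Set.image_id']
        rfl
  | succ t IH =>
      intro ht1
      obtain ⟨ih1, ih2, ih3⟩ := IH (by omega)
      set k := f (t + 1) with hkdef
      have hk : k = i ∨ k = j := hf1 (t + 1) (by omega)
      set B : Set (I → ℤ) := β '' (Set.Icc 1 t) with hB
      have hBsub : B ⊆ P := by
        rintro x ⟨s, hs, rfl⟩
        exact ih1 s hs.1 hs.2
      -- β (t+1) is in the image of step t
      have hβt1 : β (t + 1) = rs.toCartanScheme.wmap a f t (Pi.single k 1) := rfl
      have hmem : β (t + 1) ∈ (P \ B) ∪ (-B) := by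
        rw [hβt1, ← ih3]
        exact ⟨Pi.single k 1,
          ⟨rs.single_mem_Rp _ k, single_mem_suppF hk⟩, rfl⟩
      -- β (t+1) is not everywhere nonpositive
      have hposs : ¬ (∀ l, rs.toCartanScheme.wmap a f t (Pi.single k 1) l ≤ 0) := by
        intro hneg
        rcases Nat.eq_zero_or_pos t with rfl | htpos
        · have := hneg k
          simp [CartanScheme.wmap, Pi.single_eq_same] at this
        · -- t ≥ 1
          have hBcard : B.ncard = t := by
            rw [hB, Set.ncard_image_of_injOn ih2, ncard_Icc_one]
          have hPBne : (P \ B).Nonempty := by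
            by_contra h
            rw [Set.not_nonempty_iff_eq_empty, Set.diff_eq_empty] at h
            have := Set.ncard_le_ncard h (Set.Finite.subset hfin hBsub)
            omega
          obtain ⟨γ, hγP, hγB⟩ := hPBne
          have hγmem : γ ∈ rs.toCartanScheme.wmap a f t ''
              (rs.Rp (rs.toCartanScheme.obj a f t) ∩ suppF i j) := by
            rw [ih3]; exact Or.inl ⟨hγP, hγB⟩
          obtain ⟨δ, ⟨hδR, hδF⟩, hγeq⟩ := hγmem
          set k' := f t with hk'def
          have hk' : k' = i ∨ k' = j := hf1 t (by omega)
          have hkk' : k ≠ k' := hf2 t (by omega)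
          have hδF' : δ ∈ suppF k k' := by
            intro l h1 h2
            rcases hk with hki | hkj
            · rcases hk' with hk'i | hk'j
              · exact absurd (hki.trans hk'i.symm) hkk'
              · exact hδF l (by rw [← hki]; exact h1) (by rw [← hk'j]; exact h2)
            · rcases hk' with hk'i | hk'j
              · exact hδF l (by rw [← hk'i]; exact h2) (by rw [← hkj]; exact h1)
              · exact absurd (hkj.trans hk'j.symm) hkk'
          have hδdec : δ = δ k • (Pi.single k 1 : I → ℤ)
              + δ k' • (Pi.single k' 1 : I → ℤ) := decompose_suppF hkk' hδF'
          -- wmap t (e_{k'}) = - β t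
          obtain ⟨t', rfl⟩ : ∃ t', t = t' + 1 := ⟨t - 1, by omega⟩
          have hwk' : rs.toCartanScheme.wmap a f (t' + 1) (Pi.single k' 1)
              = - β (t' + 1) := by
            rw [rs.toCartanScheme.wmap_succ]
            have : rs.toCartanScheme.sref (rs.toCartanScheme.obj a f (t' + 1)) (f (t' + 1))
                (Pi.single k' 1) = - Pi.single k' 1 := by
              rw [hk'def]
              exact rs.toCartanScheme.sref_single_self _ _
            rw [this, rs.toCartanScheme.wmap_neg]
            rfl
          have hβtP : β (t' + 1) ∈ P := ih1 (t' + 1) (by omega) (le_refl _)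
          -- γ = δ k • (wmap t e_k) + δ k' • (- β t), all coordinates ≤ 0
          have hγ0 : γ = 0 := by
            funext l
            have hge : 0 ≤ γ l := hγP.1.2 l
            have hle : γ l ≤ 0 := by
              rw [← hγeq, hδdec, rs.toCartanScheme.wmap_add, rs.toCartanScheme.wmap_smul,
                rs.toCartanScheme.wmap_smul, hwk']
              have h1 : 0 ≤ δ k := hδR.2 k
              have h2 : 0 ≤ δ k' := hδR.2 k'
              have h3 : rs.toCartanScheme.wmap a f (t' + 1) (Pi.single k 1) l ≤ 0 := hneg l
              have h4 : 0 ≤ β (t' + 1) l := hβtP.1.2 l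
              simp only [Pi.add_apply, Pi.smul_apply, Pi.neg_apply, smul_eq_mul]
              have := mul_nonpos_of_nonneg_of_nonpos h1 h3
              nlinarith
            exact le_antisymm hle hge
          rw [hγ0] at hγP
          exact rs.zero_not_mem_R a i hγP.1.1
      -- hence β (t+1) ∈ P \ B
      have hc : β (t + 1) ∈ P \ B := by
        rcases hmem with h | h
        · exact h
        · exfalso
          rw [Set.mem_neg] at h
          have hPm := hBsub h
          apply hposs
          intro l
          have := hPm.1.2 l
          rw [← hβt1]
          simp only [Pi.neg_apply] at this
          omega
      have hnegc : -β (t + 1) ∉ P := by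
        intro h
        exact rs.neg_not_mem_Rp a i (v := β (t + 1)) ⟨hc.1.1.1, hc.1.1.2⟩ ⟨h.1.1, h.1.2⟩
      have hcnB : β (t + 1) ∉ -B := by
        intro h
        rw [Set.mem_neg] at h
        have hPm := hBsub h
        apply hposs
        intro l
        have := hPm.1.2 l
        rw [← hβt1]
        simp only [Pi.neg_apply] at this
        omega
      -- the new index set
      have hIcc : Set.Icc 1 (t + 1) = insert (t + 1) (Set.Icc 1 t) := by
        ext s; simp only [Set.mem_Icc, Set.mem_insert_iff]; omega
      have hBsucc : β '' (Set.Icc 1 (t + 1)) = insert (β (t + 1)) B := by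
        rw [hIcc, Set.image_insert_eq]
      refine ⟨?_, ?_, ?_⟩
      · intro s hs1 hs2
        rcases Nat.lt_or_ge s (t + 1) with h | h
        · exact ih1 s hs1 (by omega)
        · have : s = t + 1 := by omega
          subst this
          exact hc.1
      · intro x hx y hy hxy
        simp only [Set.mem_Icc] at hx hy
        rcases Nat.lt_or_ge x (t + 1) with h1 | h1 <;> rcases Nat.lt_or_ge y (t + 1) with h2 | h2
        · exact ih2 ⟨hx.1, by omega⟩ ⟨hy.1, by omega⟩ hxy
        · exfalso
          have hy' : y = t + 1 := by omega
          subst hy'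
          exact hc.2 ⟨x, ⟨hx.1, by omega⟩, hxy⟩
        · exfalso
          have hx' : x = t + 1 := by omega
          subst hx'
          exact hc.2 ⟨y, ⟨hy.1, by omega⟩, hxy.symm⟩
        · omega
      · -- the image formula
        have hwsucc : rs.toCartanScheme.wmap a f (t + 1)
            = rs.toCartanScheme.wmap a f t ∘
              rs.toCartanScheme.sref (rs.toCartanScheme.obj a f (t + 1)) (f (t + 1)) := rfl
        rw [hwsucc, Set.image_comp]
        have hinner := rs.sref_image_PF (i := i) (j := j) hk (rs.toCartanScheme.obj a f (t + 1))
        rw [rs.toCartanScheme.tau_obj_succ] at hinner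
        rw [hinner]
        rw [Set.image_union, Set.image_diff (rs.toCartanScheme.wmap_injective a f t),
          Set.image_singleton, Set.image_singleton, rs.toCartanScheme.wmap_neg, ih3,
          ← hβt1, hBsucc]
        -- set algebra
        ext x
        simp only [Set.mem_union, Set.mem_diff, Set.mem_singleton_iff, Set.mem_insert_iff,
          Set.mem_neg, Set.mem_union]
        constructor
        · rintro (⟨(⟨hxP, hxB⟩ | hxnB), hxc⟩ | hxc)
          · exact Or.inl ⟨hxP, by tauto⟩
          · exact Or.inr (Or.inr hxnB)
          · right; left; rw [hxc]; exact neg_neg _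
        · rintro (⟨hxP, hx⟩ | (hx | hx))
          · push_neg at hx
            exact Or.inl ⟨Or.inl ⟨hxP, hx.2⟩, hx.1⟩
          · right
            rw [← hx, neg_neg]
          · left
            refine ⟨Or.inr hx, ?_⟩
            intro hxc
            rw [hxc] at hx
            exact hnegc (hBsub hx)
  

end GenRootSystem

end Helpers4


section Helpers5

namespace CartanScheme

variable {I : Type*} [Fintype I] [DecidableEq I] {A : Type*} (cs : CartanScheme I A)

lemma wmap_sub (a : A) (f : ℕ → I) (t : ℕ) (u v : I → ℤ) :
    cs.wmap a f t (u - v) = cs.wmap a f t u - cs.wmap a f t v := by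
  rw [sub_eq_add_neg, cs.wmap_add, cs.wmap_neg, sub_eq_add_neg]

lemma obj_shift (a : A) (f : ℕ → I) (n : ℕ) :
    ∀ s, cs.obj a f (n + s) = cs.obj (cs.obj a f n) (fun u => f (n + u)) s := by
  intro s
  induction s with
  | zero => rfl
  | succ s ih =>
      show cs.τ (f (n + s + 1)) (cs.obj a f (n + s))
        = cs.τ (f (n + s + 1)) (cs.obj (cs.obj a f n) (fun u => f (n + u)) s)
      rw [ih]

lemma wmap_shift (a : A) (f : ℕ → I) (n : ℕ) :
    ∀ s v, cs.wmap a f (n + s) v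
      = cs.wmap a f n (cs.wmap (cs.obj a f n) (fun u => f (n + u)) s v) := by
  intro s
  induction s with
  | zero => intro v; rfl
  | succ s ih =>
      intro v
      have ho : cs.obj a f (n + s + 1) = cs.obj (cs.obj a f n) (fun u => f (n + u)) (s + 1) :=
        cs.obj_shift a f n (s + 1)
      show cs.wmap a f (n + s) (cs.sref (cs.obj a f (n + s + 1)) (f (n + s + 1)) v) = _
      rw [ih, ho]
      rfl

end CartanScheme

namespace GenRootSystem

variable {I : Type*} [Fintype I] [DecidableEq I] {A : Type*} (rs : GenRootSystem I A)

lemma phase1_top {i j : I} (hij : i ≠ j) (a : A) (f : ℕ → I)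
    (hf1 : ∀ t, 1 ≤ t → f t = i ∨ f t = j)
    (hf2 : ∀ t, 1 ≤ t → f (t + 1) ≠ f t)
    (hfin : (rs.Rp a ∩ suppF i j).Finite) (n : ℕ)
    (hn : (rs.Rp a ∩ suppF i j).ncard = n) :
    ((fun s => rs.toCartanScheme.wmap a f (s - 1) (Pi.single (f s) 1)) '' (Set.Icc 1 n)
      = rs.Rp a ∩ suppF i j) ∧
    rs.toCartanScheme.wmap a f n '' (rs.Rp (rs.toCartanScheme.obj a f n) ∩ suppF i j)
      = -(rs.Rp a ∩ suppF i j) := by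
  obtain ⟨h1, h2, h3⟩ := rs.phase1 hij a f hf1 hf2 hfin n (le_of_eq hn.symm)
  have hBsub : (fun s => rs.toCartanScheme.wmap a f (s - 1) (Pi.single (f s) 1)) ''
      (Set.Icc 1 n) ⊆ rs.Rp a ∩ suppF i j := by
    rintro x ⟨s, hs, rfl⟩
    exact h1 s hs.1 hs.2
  have hBP : (fun s => rs.toCartanScheme.wmap a f (s - 1) (Pi.single (f s) 1)) ''
      (Set.Icc 1 n) = rs.Rp a ∩ suppF i j := by
    apply Set.eq_of_subset_of_ncard_le hBsub _ hfin
    rw [Set.ncard_image_of_injOn h2, ncard_Icc_one, hn]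
  refine ⟨hBP, ?_⟩
  rw [h3, hBP, Set.diff_self, Set.empty_union]

lemma det_wmap {i j : I} (hij : i ≠ j) (a : A) (f : ℕ → I)
    (hf1 : ∀ t, 1 ≤ t → f t = i ∨ f t = j) : ∀ t : ℕ,
    (rs.toCartanScheme.wmap a f t (Pi.single i 1) i) *
      (rs.toCartanScheme.wmap a f t (Pi.single j 1) j) -
    (rs.toCartanScheme.wmap a f t (Pi.single i 1) j) *
      (rs.toCartanScheme.wmap a f t (Pi.single j 1) i) = (-1) ^ t := by
  intro t
  induction t with
  | zero =>
      show (Pi.single i 1 : I → ℤ) i * (Pi.single j 1 : I → ℤ) j -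
        (Pi.single i 1 : I → ℤ) j * (Pi.single j 1 : I → ℤ) i = 1
      simp [Pi.single_apply, hij, Ne.symm hij]
  | succ t ih =>
      have hw : ∀ l : I, rs.toCartanScheme.wmap a f (t + 1) (Pi.single l 1)
          = rs.toCartanScheme.wmap a f t (Pi.single l 1)
            - rs.toCartanScheme.c (rs.toCartanScheme.obj a f (t + 1)) (f (t + 1)) l •
              rs.toCartanScheme.wmap a f t (Pi.single (f (t + 1)) 1) := by
        intro l
        rw [rs.toCartanScheme.wmap_succ, rs.toCartanScheme.sref_single,
          rs.toCartanScheme.wmap_sub, rs.toCartanScheme.wmap_smul]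
      rcases hf1 (t + 1) (by omega) with hk | hk <;>
      · rw [hw i, hw j, hk, rs.c_diag]
        simp only [Pi.sub_apply, Pi.smul_apply, smul_eq_mul, pow_succ]
        linear_combination (-1 : ℤ) * ih

end GenRootSystem

section Arith

lemma split01 {x y : ℤ} (hx : 0 ≤ x) (hy : 0 ≤ y) (h : x + y = 1) :
    (x = 0 ∧ y = 1) ∨ (x = 1 ∧ y = 0) := by omega

lemma split00 {x y : ℤ} (hx : 0 ≤ x) (hy : 0 ≤ y) (h : x + y = 0) :
    x = 0 ∧ y = 0 := by omega

lemma mul_one_nonneg {x y : ℤ} (hx : 0 ≤ x) (hy : 0 ≤ y) (h : x * y = 1) :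
    x = 1 ∧ y = 1 := by
  have hx1 : x = 1 ∨ x = -1 := Int.isUnit_iff.mp (IsUnit.of_mul_eq_one y h)
  have hx' : x = 1 := by omega
  subst hx'
  rw [one_mul] at h
  exact ⟨rfl, h⟩

lemma matrix_lemma {a b c d p q r s : ℤ} (ha : 0 ≤ a) (hb : 0 ≤ b) (hc : 0 ≤ c) (hd : 0 ≤ d)
    (hp : 0 ≤ p) (hq : 0 ≤ q) (hr : 0 ≤ r) (hs : 0 ≤ s)
    (h1 : p * a + r * c = 1) (h2 : p * b + r * d = 0)
    (h3 : q * a + s * c = 0) (h4 : q * b + s * d = 1) :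
    (a = 1 ∧ b = 0 ∧ c = 0 ∧ d = 1) ∨ (a = 0 ∧ b = 1 ∧ c = 1 ∧ d = 0) := by
  obtain ⟨hpb, hrd⟩ := split00 (mul_nonneg hp hb) (mul_nonneg hr hd) h2
  obtain ⟨hqa, hsc⟩ := split00 (mul_nonneg hq ha) (mul_nonneg hs hc) h3
  rcases split01 (mul_nonneg hp ha) (mul_nonneg hr hc) h1 with ⟨hpa, hrc⟩ | ⟨hpa, hrc⟩
  · -- r * c = 1
    right
    obtain ⟨hr1, hc1⟩ := mul_one_nonneg hr hc hrc
    subst hr1; subst hc1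
    have hd0 : d = 0 := by omega
    have hs0 : s = 0 := by omega
    subst hs0
    have hqb : q * b = 1 := by omega
    obtain ⟨hq1, hb1⟩ := mul_one_nonneg hq hb hqb
    subst hq1
    have ha0 : a = 0 := by omega
    exact ⟨ha0, hb1, rfl, hd0⟩
  · -- p * a = 1
    left
    obtain ⟨hp1, ha1⟩ := mul_one_nonneg hp ha hpa
    subst hp1; subst ha1
    have hb0 : b = 0 := by omega
    have hq0 : q = 0 := by omega
    subst hq0
    have hsd : s * d = 1 := by omega
    obtain ⟨hs1, hd1⟩ := mul_one_nonneg hs hd hsd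
    subst hs1
    have hc0 : c = 0 := by omega
    exact ⟨rfl, hb0, hc0, hd1⟩

end Arith

end Helpers5

/-- Let `m := m^a_{ij} = |R^+(a) ∩ (ℤ≥0 α^a_i + ℤ≥0 α^a_j)|` be finite, and let `f`
alternate `i, j, i, j, …` (i.e. `f(2t−1) = i`, `f(2t) = j`).  Then `a_{f,2m} = a`,
`1^a s_{f,2m} = id`, and
`R^+(a) ∩ (ℤ≥0 α^a_i + ℤ≥0 α^a_j) = { 1^a s_{f,t-1}(α^{a_{f,t-1}}_{f(t)}) : 1 ≤ t ≤ m }`. -/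
theorem rank_two_longest {I : Type*} [Fintype I] [DecidableEq I] {A : Type*}
    (rs : GenRootSystem I A) (a : A) (i j : I)
    (hfin : (rs.Rp a ∩ {v | ∀ l, l ≠ i → l ≠ j → v l = 0}).Finite)
    (m : ℕ) (hm : (rs.Rp a ∩ {v | ∀ l, l ≠ i → l ≠ j → v l = 0}).ncard = m) :
    rs.obj a (fun t => if t % 2 = 1 then i else j) (2 * m) = a ∧
    rs.wmap a (fun t => if t % 2 = 1 then i else j) (2 * m) = id ∧
    rs.Rp a ∩ {v | ∀ l, l ≠ i → l ≠ j → v l = 0} =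
      {v | ∃ t : ℕ, 1 ≤ t ∧ t ≤ m ∧
        v = rs.wmap a (fun t => if t % 2 = 1 then i else j) (t - 1)
              (Pi.single (if t % 2 = 1 then i else j) 1)} := by
  classical
  by_cases hij : i = j
  · -- degenerate case i = j
    subst hij
    simp only [ite_self]
    have hPeq : rs.Rp a ∩ {v : I → ℤ | ∀ l, l ≠ i → l ≠ i → v l = 0}
        = {Pi.single i 1} := by
      ext v
      constructor
      · intro hv
        rcases rs.scalar_cases a i v hv.1.1 (fun l hl => hv.2 l hl hl) with h | h
        · exact h
        · exfalso
          have := hv.1.2 i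
          rw [h] at this
          simp [Pi.single_eq_same] at this
      · intro hv
        rw [Set.mem_singleton_iff] at hv
        subst hv
        exact ⟨rs.single_mem_Rp a i, fun l hl _ => by simp [Pi.single_apply, hl]⟩
    rw [hPeq] at hm
    rw [Set.ncard_singleton] at hm
    subst hm
    refine ⟨?_, ?_, ?_⟩
    · show rs.τ i (rs.τ i a) = a
      exact rs.τ_invol i a
    · funext v
      show rs.toCartanScheme.sref (rs.toCartanScheme.obj a (fun _ => i) 1) i
        (rs.toCartanScheme.sref (rs.toCartanScheme.obj a (fun _ => i) 2) i v) = v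
      rw [show rs.toCartanScheme.obj a (fun _ => i) 2 = a from rs.τ_invol i a,
        show rs.toCartanScheme.obj a (fun _ => i) 1 = rs.τ i a from rfl,
        rs.toCartanScheme.sref_tau, rs.toCartanScheme.sref_sref]
    · rw [hPeq]
      ext v
      simp only [Set.mem_singleton_iff, Set.mem_setOf_eq]
      constructor
      · intro hv
        exact ⟨1, le_refl 1, le_refl 1, hv⟩
      · rintro ⟨t, ht1, ht2, hv⟩
        have : t = 1 := le_antisymm ht2 ht1
        subst this
        exact hv
  · -- main case i ≠ j
    have hfin' : (rs.Rp a ∩ GenRootSystem.suppF i j).Finite := hfin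
    have hm' : (rs.Rp a ∩ GenRootSystem.suppF i j).ncard = m := hm
    clear hfin hm
    set f : ℕ → I := fun t => if t % 2 = 1 then i else j with hf
    have hf1 : ∀ t, 1 ≤ t → f t = i ∨ f t = j := by
      intro t _
      by_cases h : t % 2 = 1 <;> simp [hf, h]
    have hf2 : ∀ t, 1 ≤ t → f (t + 1) ≠ f t := by
      intro t _
      rcases Nat.mod_two_eq_zero_or_one t with h | h
      · have h1 : (t + 1) % 2 = 1 := by omega
        simp only [hf]
        rw [if_pos h1, if_neg (by omega)]
        exact hij
      · have h1 : (t + 1) % 2 = 0 := by omega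
        simp only [hf]
        rw [if_neg (by omega), if_pos h]
        exact fun hh => hij hh.symm
    obtain ⟨hB, hIm⟩ := rs.phase1_top hij a f hf1 hf2 hfin' m hm'
    set b := rs.toCartanScheme.obj a f m with hb
    set g : ℕ → I := fun u => f (m + u) with hg
    have hg1 : ∀ t, 1 ≤ t → g t = i ∨ g t = j := fun t _ => hf1 (m + t) (by omega)
    have hg2 : ∀ t, 1 ≤ t → g (t + 1) ≠ g t := fun t _ => hf2 (m + t) (by omega)
    have hPbeq : rs.Rp b ∩ GenRootSystem.suppF i j
        = rs.toCartanScheme.kmap a f m '' (-(rs.Rp a ∩ GenRootSystem.suppF i j)) := by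
      rw [← hIm]
      ext x
      constructor
      · intro hx
        exact ⟨rs.toCartanScheme.wmap a f m x, ⟨x, hx, rfl⟩,
          rs.toCartanScheme.kmap_wmap a f m x⟩
      · rintro ⟨y, ⟨z, hz, rfl⟩, rfl⟩
        rwa [rs.toCartanScheme.kmap_wmap]
    have hnegfin : (-(rs.Rp a ∩ GenRootSystem.suppF i j)).Finite := by
      have : -(rs.Rp a ∩ GenRootSystem.suppF i j)
          = Neg.neg '' (rs.Rp a ∩ GenRootSystem.suppF i j) := Set.image_neg_eq_neg.symm
      rw [this]
      exact hfin'.image _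
    have hfinb : (rs.Rp b ∩ GenRootSystem.suppF i j).Finite := by
      rw [hPbeq]
      exact hnegfin.image _
    have hcardb : (rs.Rp b ∩ GenRootSystem.suppF i j).ncard = m := by
      rw [hPbeq, Set.ncard_image_of_injective _ (rs.toCartanScheme.kmap_injective a f m),
        ← Set.image_neg_eq_neg, Set.ncard_image_of_injective _ neg_injective, hm']
    obtain ⟨hB2, hIm2⟩ := rs.phase1_top hij b g hg1 hg2 hfinb m hcardb
    have hobj2 : rs.toCartanScheme.obj a f (2 * m) = rs.toCartanScheme.obj b g m := by
      rw [show 2 * m = m + m by ring]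
      exact rs.toCartanScheme.obj_shift a f m m
    have hwcomp : ∀ v, rs.toCartanScheme.wmap a f (2 * m) v
        = rs.toCartanScheme.wmap a f m (rs.toCartanScheme.wmap b g m v) := by
      intro v
      rw [show 2 * m = m + m by ring]
      exact rs.toCartanScheme.wmap_shift a f m m v
    set b2 := rs.toCartanScheme.obj b g m with hb2
    have hW : rs.toCartanScheme.wmap a f (2 * m) '' (rs.Rp b2 ∩ GenRootSystem.suppF i j)
        = rs.Rp a ∩ GenRootSystem.suppF i j := by
      have h1 : rs.toCartanScheme.wmap a f (2 * m) '' (rs.Rp b2 ∩ GenRootSystem.suppF i j)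
          = rs.toCartanScheme.wmap a f m ''
            (rs.toCartanScheme.wmap b g m '' (rs.Rp b2 ∩ GenRootSystem.suppF i j)) := by
        rw [← Set.image_comp]
        exact Set.image_congr fun x _ => hwcomp x
      rw [h1, hIm2, rs.wmap_image_neg, hIm, neg_neg]
    -- W fixes the two simple roots
    have hsingle_mem : ∀ (o : A) (k : I), k = i ∨ k = j →
        (Pi.single k 1 : I → ℤ) ∈ rs.Rp o ∩ GenRootSystem.suppF i j :=
      fun o k hk => ⟨rs.single_mem_Rp o k, GenRootSystem.single_mem_suppF hk⟩
    have hu_mem : rs.toCartanScheme.wmap a f (2 * m) (Pi.single i 1)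
        ∈ rs.Rp a ∩ GenRootSystem.suppF i j := by
      rw [← hW]
      exact ⟨Pi.single i 1, hsingle_mem b2 i (Or.inl rfl), rfl⟩
    have hw_mem : rs.toCartanScheme.wmap a f (2 * m) (Pi.single j 1)
        ∈ rs.Rp a ∩ GenRootSystem.suppF i j := by
      rw [← hW]
      exact ⟨Pi.single j 1, hsingle_mem b2 j (Or.inr rfl), rfl⟩
    obtain ⟨δi, hδi, hδieq⟩ : (Pi.single i 1 : I → ℤ)
        ∈ rs.toCartanScheme.wmap a f (2 * m) '' (rs.Rp b2 ∩ GenRootSystem.suppF i j) := by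
      rw [hW]; exact hsingle_mem a i (Or.inl rfl)
    obtain ⟨δj, hδj, hδjeq⟩ : (Pi.single j 1 : I → ℤ)
        ∈ rs.toCartanScheme.wmap a f (2 * m) '' (rs.Rp b2 ∩ GenRootSystem.suppF i j) := by
      rw [hW]; exact hsingle_mem a j (Or.inr rfl)
    have hcomb : ∀ δ : I → ℤ, δ ∈ rs.Rp b2 ∩ GenRootSystem.suppF i j →
        rs.toCartanScheme.wmap a f (2 * m) δ
          = δ i • rs.toCartanScheme.wmap a f (2 * m) (Pi.single i 1)
            + δ j • rs.toCartanScheme.wmap a f (2 * m) (Pi.single j 1) := by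
      intro δ hδ
      conv_lhs => rw [GenRootSystem.decompose_suppF hij hδ.2]
      rw [rs.toCartanScheme.wmap_add, rs.toCartanScheme.wmap_smul, rs.toCartanScheme.wmap_smul]
    have hδi_i := congrFun ((hδieq.symm).trans (hcomb δi hδi)) i
    have hδi_j := congrFun ((hδieq.symm).trans (hcomb δi hδi)) j
    have hδj_i := congrFun ((hδjeq.symm).trans (hcomb δj hδj)) i
    have hδj_j := congrFun ((hδjeq.symm).trans (hcomb δj hδj)) j
    simp only [Pi.add_apply, Pi.smul_apply, smul_eq_mul, Pi.single_eq_same,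
      Pi.single_apply, if_neg hij, if_neg (Ne.symm hij)] at hδi_i hδi_j hδj_i hδj_j
    have hupos : ∀ l, 0 ≤ rs.toCartanScheme.wmap a f (2 * m) (Pi.single i 1) l := hu_mem.1.2
    have hwpos : ∀ l, 0 ≤ rs.toCartanScheme.wmap a f (2 * m) (Pi.single j 1) l := hw_mem.1.2
    have hdet := rs.det_wmap hij a f hf1 (2 * m)
    rcases matrix_lemma (hupos i) (hupos j) (hwpos i) (hwpos j)
        (hδi.1.2 i) (hδj.1.2 i) (hδi.1.2 j) (hδj.1.2 j)
        hδi_i.symm hδi_j.symm hδj_i.symm hδj_j.symm with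
      ⟨ha1, hb1, hc1, hd1⟩ | ⟨ha1, hb1, hc1, hd1⟩
    swap
    · exfalso
      rw [ha1, hb1, hc1, hd1, pow_mul] at hdet
      norm_num at hdet
    have hWei : rs.toCartanScheme.wmap a f (2 * m) (Pi.single i 1) = Pi.single i 1 := by
      funext l
      by_cases hli : l = i
      · subst hli; rw [ha1, Pi.single_eq_same]
      · by_cases hlj : l = j
        · subst hlj; rw [hb1, Pi.single_apply, if_neg (fun hh => hij hh.symm)]
        · rw [rs.wmap_apply_ne a f hf1 (2 * m) _ hli hlj]
    have hWej : rs.toCartanScheme.wmap a f (2 * m) (Pi.single j 1) = Pi.single j 1 := by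
      funext l
      by_cases hlj : l = j
      · subst hlj; rw [hd1, Pi.single_eq_same]
      · by_cases hli : l = i
        · subst hli; rw [hc1, Pi.single_apply, if_neg hij]
        · rw [rs.wmap_apply_ne a f hf1 (2 * m) _ hli hlj]
    have hWall : ∀ l, rs.toCartanScheme.wmap a f (2 * m) (Pi.single l 1) = Pi.single l 1 := by
      intro l
      by_cases hli : l = i
      · subst hli; exact hWei
      by_cases hlj : l = j
      · subst hlj; exact hWej
      have hγR : rs.toCartanScheme.wmap a f (2 * m) (Pi.single l 1) ∈ rs.R a :=
        rs.wmap_mem_R a f (2 * m) _ (rs.single_mem_R _ l)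
      have hγl : rs.toCartanScheme.wmap a f (2 * m) (Pi.single l 1) l = 1 := by
        rw [rs.wmap_apply_ne a f hf1 (2 * m) _ hli hlj, Pi.single_eq_same]
      have hγpos : ∀ l', 0 ≤ rs.toCartanScheme.wmap a f (2 * m) (Pi.single l 1) l' := by
        rcases rs.pos_or_neg a _ hγR with h | h
        · exact h
        · exfalso; have := h l; omega
      have hδR : rs.toCartanScheme.kmap a f (2 * m) (Pi.single l 1)
          ∈ rs.R (rs.toCartanScheme.obj a f (2 * m)) :=
        rs.kmap_mem_R a f (2 * m) _ (rs.single_mem_R a l)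
      have hδl : rs.toCartanScheme.kmap a f (2 * m) (Pi.single l 1) l = 1 := by
        rw [rs.kmap_apply_ne a f hf1 (2 * m) _ hli hlj, Pi.single_eq_same]
      have hδpos : ∀ l', 0 ≤ rs.toCartanScheme.kmap a f (2 * m) (Pi.single l 1) l' := by
        rcases rs.pos_or_neg _ _ hδR with h | h
        · exact h
        · exfalso; have := h l; omega
      set γ := rs.toCartanScheme.wmap a f (2 * m) (Pi.single l 1) with hγ
      set δ := rs.toCartanScheme.kmap a f (2 * m) (Pi.single l 1) with hδ
      have hu1 : (δ - Pi.single l 1) ∈ GenRootSystem.suppF i j := by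
        intro l' h1 h2
        have hh : δ l' = (Pi.single l 1 : I → ℤ) l' := by
          rw [hδ]; exact rs.kmap_apply_ne a f hf1 (2 * m) _ h1 h2
        simp [Pi.sub_apply, hh]
      have hWu : rs.toCartanScheme.wmap a f (2 * m) (δ - Pi.single l 1) = δ - Pi.single l 1 := by
        conv_lhs => rw [GenRootSystem.decompose_suppF hij hu1]
        rw [rs.toCartanScheme.wmap_add, rs.toCartanScheme.wmap_smul, rs.toCartanScheme.wmap_smul,
          hWei, hWej]
        exact (GenRootSystem.decompose_suppF hij hu1).symm
      have hkey : Pi.single l 1 = γ + (δ - Pi.single l 1) := by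
        have h0 : rs.toCartanScheme.wmap a f (2 * m) δ = Pi.single l 1 :=
          rs.toCartanScheme.wmap_kmap a f (2 * m) _
        calc (Pi.single l 1 : I → ℤ) = rs.toCartanScheme.wmap a f (2 * m) δ := h0.symm
          _ = rs.toCartanScheme.wmap a f (2 * m) (Pi.single l 1 + (δ - Pi.single l 1)) := by
              rw [show (Pi.single l 1 : I → ℤ) + (δ - Pi.single l 1) = δ from by abel]
          _ = γ + (δ - Pi.single l 1) := by
              rw [rs.toCartanScheme.wmap_add, hWu, hγ]
      funext l'
      by_cases h'i : l' = i
      · rw [h'i]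
        have h := congrFun hkey i
        simp only [Pi.add_apply, Pi.sub_apply] at h
        have hsi : (Pi.single l 1 : I → ℤ) i = 0 := by
          rw [Pi.single_apply, if_neg (fun hh => hli hh.symm)]
        rw [hsi] at h
        rw [hsi]
        have h1 := hγpos i
        have h2 := hδpos i
        omega
      · by_cases h'j : l' = j
        · rw [h'j]
          have h := congrFun hkey j
          simp only [Pi.add_apply, Pi.sub_apply] at h
          have hsj : (Pi.single l 1 : I → ℤ) j = 0 := by
            rw [Pi.single_apply, if_neg (fun hh => hlj hh.symm)]
          rw [hsj] at h
          rw [hsj]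
          have h1 := hγpos j
          have h2 := hδpos j
          omega
        · exact rs.wmap_apply_ne a f hf1 (2 * m) _ h'i h'j
    have hWzero : rs.toCartanScheme.wmap a f (2 * m) 0 = 0 := by
      have h := rs.toCartanScheme.wmap_smul a f (2 * m) 0 0
      simpa using h
    have hWid : rs.wmap a f (2 * m) = id := by
      funext v
      let Wh : (I → ℤ) →+ (I → ℤ) :=
        { toFun := rs.toCartanScheme.wmap a f (2 * m),
          map_zero' := hWzero,
          map_add' := rs.toCartanScheme.wmap_add a f (2 * m) }
      show Wh v = v
      conv_lhs => rw [show v = ∑ l, Pi.single l (v l) from (Finset.univ_sum_single v).symm]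
      rw [map_sum]
      have hterm : ∀ l : I, Wh (Pi.single l (v l)) = Pi.single l (v l) := by
        intro l
        have hsm : (Pi.single l (v l) : I → ℤ) = (v l) • Pi.single l 1 := by
          funext l'
          simp only [Pi.single_apply, Pi.smul_apply, smul_eq_mul]
          split <;> simp
        rw [hsm]
        show rs.toCartanScheme.wmap a f (2 * m) _ = _
        rw [rs.toCartanScheme.wmap_smul, hWall l]
      rw [Finset.sum_congr rfl (fun l _ => hterm l), Finset.univ_sum_single]
    refine ⟨?_, hWid, ?_⟩
    · exact ((rs.R4 a (rs.toCartanScheme.obj a f (2 * m))).mpr ⟨f, 2 * m, rfl, hWall⟩).symm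
    · have hgoalL : rs.Rp a ∩ {v : I → ℤ | ∀ l, l ≠ i → l ≠ j → v l = 0}
          = (fun s => rs.toCartanScheme.wmap a f (s - 1) (Pi.single (f s) 1)) ''
            (Set.Icc 1 m) := hB.symm
      rw [hgoalL]
      ext v
      simp only [Set.mem_image, Set.mem_Icc, Set.mem_setOf_eq]
      constructor
      · rintro ⟨s, ⟨hs1, hs2⟩, rfl⟩
        exact ⟨s, hs1, hs2, rfl⟩
      · rintro ⟨t, ht1, ht2, rfl⟩
        exact ⟨t, ⟨ht1, ht2⟩, rfl⟩
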